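/- Existence and uniqueness for a first-order periodic BVP: consider u'(t) = f(t, u(t)), t ∈ [0,S], u(0) = u(S), with f continuous, and suppose there exist a > b > 0 such that for all r₁ ≤ r₂ in ℝ: 0 ≤ (f(t, r₂) + a·r₂) − (f(t, r₁) + a·r₁) ≤ b·(r₂ − r₁). If the problem has a lower solution (or an upper solution), then it has a unique solution in C[0,S]. -/

import Mathlib

open Set
open MeasureTheory intervalIntegral

noncomputable section PBVP
variable (S a : ℝ) (f : ℝ → ℝ → ℝ)
def pg (w : ℝ → ℝ) (z : ℝ) : ℝ := f z (w z) + a * w z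
def pA (w : ℝ → ℝ) (t : ℝ) : ℝ := ∫ z in (0:ℝ)..t, Real.exp (a * z) * pg a f w z
def pF (w : ℝ → ℝ) (t : ℝ) : ℝ :=
  (Real.exp (a * S) - 1)⁻¹ * Real.exp (-(a * t)) *
    ((Real.exp (a * S) - 1) * pA a f w t + pA a f w S)
variable {a f} {w : ℝ → ℝ}
theorem pg_continuous (hf : Continuous fun p : ℝ × ℝ => f p.1 p.2) (hw : Continuous w) :
    Continuous (pg a f w) :=
  (hf.comp (continuous_id.prodMk hw)).add (continuous_const.mul hw)

theorem integral_exp_mul (ha : a ≠ 0) (l r : ℝ) :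
    ∫ z in l..r, Real.exp (a * z) = (Real.exp (a * r) - Real.exp (a * l)) / a := by
  have hd : ∀ z ∈ uIcc l r, HasDerivAt (fun z => Real.exp (a * z) / a) (Real.exp (a * z)) z := by
    intro z _
    have := (((hasDerivAt_id z).const_mul a).exp).div_const a
    simpa [mul_one, mul_div_assoc, mul_div_cancel_left₀, ha] using this
  rw [intervalIntegral.integral_eq_sub_of_hasDerivAt hd
    ((Real.continuous_exp.comp (continuous_const.mul continuous_id)).intervalIntegrable _ _)]
  ring

theorem pA_hasDerivAt (hf : Continuous fun p : ℝ × ℝ => f p.1 p.2) (hw : Continuous w) (t : ℝ) :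
    HasDerivAt (pA a f w) (Real.exp (a * t) * pg a f w t) t := by
  have hc : Continuous fun z => Real.exp (a * z) * pg a f w z :=
    (Real.continuous_exp.comp (continuous_const.mul continuous_id)).mul (pg_continuous hf hw)
  exact integral_hasDerivAt_right (hc.intervalIntegrable _ _)
    hc.aestronglyMeasurable.stronglyMeasurableAtFilter hc.continuousAt

variable {S}

theorem pF_hasDerivAt (hE : Real.exp (a * S) - 1 ≠ 0)
    (hf : Continuous fun p : ℝ × ℝ => f p.1 p.2) (hw : Continuous w) (t : ℝ) :
    HasDerivAt (pF S a f w) (-(a * pF S a f w t) + pg a f w t) t := by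
  have h1 : HasDerivAt (fun t : ℝ => (Real.exp (a * S) - 1)⁻¹ * Real.exp (-(a * t)))
      ((Real.exp (a * S) - 1)⁻¹ * (Real.exp (-(a * t)) * -(a * 1))) t := by
    exact ((((hasDerivAt_id t).const_mul a).neg).exp).const_mul _
  have h2 : HasDerivAt (fun t : ℝ => (Real.exp (a * S) - 1) * pA a f w t + pA a f w S)
      ((Real.exp (a * S) - 1) * (Real.exp (a * t) * pg a f w t)) t := by
    exact (((pA_hasDerivAt hf hw t).const_mul _).add_const _)
  have h := h1.mul h2
  have he : Real.exp (-(a * t)) * Real.exp (a * t) = 1 := by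
    rw [← Real.exp_add]; simp
  have hc : (Real.exp (a * S) - 1)⁻¹ * (Real.exp (a * S) - 1) = 1 := inv_mul_cancel₀ hE
  refine (show HasDerivAt (pF S a f w) _ t from h).congr_deriv ?_
  symm
  unfold pF
  linear_combination (-(pg a f w t) * (Real.exp (a*S)-1)⁻¹ * (Real.exp (a*S)-1)) * he +
    (-(pg a f w t)) * hc

theorem pF_periodic (hE : Real.exp (a * S) - 1 ≠ 0) :
    pF S a f w 0 = pF S a f w S := by
  have h0 : pA a f w 0 = 0 := intervalIntegral.integral_same
  have he : Real.exp (-(a * S)) * Real.exp (a * S) = 1 := by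
    rw [← Real.exp_add]; simp
  unfold pF
  rw [h0, show (-(a*(0:ℝ))) = 0 by ring, Real.exp_zero]
  linear_combination (-(Real.exp (a*S)-1)⁻¹ * pA a f w S) * he



theorem pF_dist_le {b M : ℝ} (hS : 0 < S) (ha : 0 < a)
    (hf : Continuous fun p : ℝ × ℝ => f p.1 p.2)
    {w w' : ℝ → ℝ} (hw : Continuous w) (hw' : Continuous w')
    (hbM : 0 ≤ b * M)
    (hδ : ∀ z ∈ Icc (0:ℝ) S, |pg a f w z - pg a f w' z| ≤ b * M)
    {t : ℝ} (ht : t ∈ Icc (0:ℝ) S) :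
    |pF S a f w t - pF S a f w' t| ≤ b / a * M := by
  obtain ⟨ht0, htS⟩ := ht
  have hexp : Continuous fun z : ℝ => Real.exp (a * z) := by continuity
  set E := Real.exp (a * S) with hEdef
  set x := Real.exp (a * t) with hxdef
  set y := Real.exp (-(a * t)) with hydef
  have hE1 : 1 < E := by
    rw [hEdef, ← Real.exp_zero]; exact Real.exp_lt_exp.2 (by positivity)
  have hc0 : (0:ℝ) ≤ (E - 1)⁻¹ := inv_nonneg.2 (by linarith)
  have hker : Continuous fun z => Real.exp (a * z) * (pg a f w z - pg a f w' z) :=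
    hexp.mul ((pg_continuous hf hw).sub (pg_continuous hf hw'))
  have hint : ∀ l r : ℝ, IntervalIntegrable
      (fun z => Real.exp (a * z) * (pg a f w z - pg a f w' z)) volume l r :=
    fun l r => hker.intervalIntegrable l r
  have hD : ∀ s : ℝ, pA a f w s - pA a f w' s
      = ∫ z in (0:ℝ)..s, Real.exp (a * z) * (pg a f w z - pg a f w' z) := by
    intro s
    unfold pA
    rw [← intervalIntegral.integral_sub (f := fun z => Real.exp (a * z) * pg a f w z)
      (g := fun z => Real.exp (a * z) * pg a f w' z)
      ((hexp.mul (pg_continuous hf hw)).intervalIntegrable _ _)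
      ((hexp.mul (pg_continuous hf hw')).intervalIntegrable _ _)]
    congr 1; ext z; ring
  have key : ∀ l r : ℝ, l ≤ r → (∀ z ∈ Icc l r, |pg a f w z - pg a f w' z| ≤ b * M) →
      |∫ z in l..r, Real.exp (a * z) * (pg a f w z - pg a f w' z)|
        ≤ b * M * ((Real.exp (a * r) - Real.exp (a * l)) / a) := by
    intro l r hlr hbd
    calc |∫ z in l..r, Real.exp (a * z) * (pg a f w z - pg a f w' z)|
        ≤ ∫ z in l..r, |Real.exp (a * z) * (pg a f w z - pg a f w' z)| :=
          intervalIntegral.abs_integral_le_integral_abs hlr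
      _ ≤ ∫ z in l..r, Real.exp (a * z) * (b * M) := by
          apply intervalIntegral.integral_mono_on hlr (hint l r).abs
            ((hexp.mul continuous_const).intervalIntegrable _ _)
          intro z hz
          rw [abs_mul, abs_of_nonneg (Real.exp_pos _).le]
          exact mul_le_mul_of_nonneg_left (hbd z hz) (Real.exp_pos _).le
      _ = b * M * ((Real.exp (a * r) - Real.exp (a * l)) / a) := by
          rw [intervalIntegral.integral_mul_const, integral_exp_mul ha.ne']; ring
  have h1 := key 0 t ht0 (fun z hz => hδ z ⟨hz.1, hz.2.trans htS⟩)
  have h2 := key t S htS (fun z hz => hδ z ⟨ht0.trans hz.1, hz.2⟩)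
  rw [mul_zero, Real.exp_zero] at h1
  have hsplit := intervalIntegral.integral_add_adjacent_intervals (hint 0 t) (hint t S)
  set I1 := ∫ z in (0:ℝ)..t, Real.exp (a * z) * (pg a f w z - pg a f w' z) with hI1
  set I2 := ∫ z in t..S, Real.exp (a * z) * (pg a f w z - pg a f w' z) with hI2
  have e1 : pA a f w t = pA a f w' t + I1 := by linarith [hD t]
  have e2 : pA a f w S = pA a f w' S + (I1 + I2) := by
    have := hD S; rw [← hsplit] at this; linarith
  have hrepr : pF S a f w t - pF S a f w' t = (E - 1)⁻¹ * y * (E * I1 + I2) := by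
    unfold pF
    rw [← hEdef, ← hydef, e1, e2]; ring
  have he : y * x = 1 := by rw [hydef, hxdef, ← Real.exp_add]; simp
  have hcE : (E - 1)⁻¹ * (E - 1) = 1 := inv_mul_cancel₀ (by linarith)
  have hy0 : (0:ℝ) ≤ y := (Real.exp_pos _).le
  have habs : |E * I1 + I2| ≤ E * (b * M * ((x - 1) / a)) + b * M * ((E - x) / a) := by
    refine (abs_add_le _ _).trans (add_le_add ?_ h2)
    rw [abs_mul, abs_of_nonneg (by linarith : (0:ℝ) ≤ E)]
    exact mul_le_mul_of_nonneg_left h1 (by linarith)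
  calc |pF S a f w t - pF S a f w' t|
      = (E - 1)⁻¹ * y * |E * I1 + I2| := by
        rw [hrepr, abs_mul, abs_mul, abs_of_nonneg hc0, abs_of_nonneg hy0]
    _ ≤ (E - 1)⁻¹ * y * (E * (b * M * ((x - 1) / a)) + b * M * ((E - x) / a)) :=
        mul_le_mul_of_nonneg_left habs (by positivity)
    _ = b / a * M := by
        linear_combination (b * M / a * (E - 1)⁻¹ * (E - 1)) * he + (b * M / a) * hcE

end PBVP

open Set

/-- Existence and uniqueness for the first-order periodic BVP
u'(t) = f(t, u(t)), u(0) = u(S), given a lower or an upper solution. -/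
theorem periodic_bvp_unique_solution
    (S a b : ℝ) (hS : 0 < S) (hb : 0 < b) (hba : b < a)
    (f : ℝ → ℝ → ℝ) (hf : Continuous fun p : ℝ × ℝ => f p.1 p.2)
    (hcond : ∀ t ∈ Icc (0 : ℝ) S, ∀ r₁ r₂ : ℝ, r₁ ≤ r₂ →
      0 ≤ (f t r₂ + a * r₂) - (f t r₁ + a * r₁) ∧
        (f t r₂ + a * r₂) - (f t r₁ + a * r₁) ≤ b * (r₂ - r₁))
    (hlowup :
      (∃ α α' : ℝ → ℝ,
        (∀ t ∈ Icc (0 : ℝ) S, HasDerivWithinAt α (α' t) (Icc 0 S) t) ∧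
        (∀ t ∈ Icc (0 : ℝ) S, α' t ≤ f t (α t)) ∧ α 0 ≤ α S) ∨
      (∃ α α' : ℝ → ℝ,
        (∀ t ∈ Icc (0 : ℝ) S, HasDerivWithinAt α (α' t) (Icc 0 S) t) ∧
        (∀ t ∈ Icc (0 : ℝ) S, f t (α t) ≤ α' t) ∧ α S ≤ α 0)) :
    ∃ u : ℝ → ℝ,
      ((∀ t ∈ Icc (0 : ℝ) S, HasDerivWithinAt u (f t (u t)) (Icc 0 S) t) ∧
        u 0 = u S) ∧
      ∀ v : ℝ → ℝ,
        (∀ t ∈ Icc (0 : ℝ) S, HasDerivWithinAt v (f t (v t)) (Icc 0 S) t) →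
        v 0 = v S → Set.EqOn v u (Icc 0 S) := by
  have ha : 0 < a := hb.trans hba
  -- Lipschitz bound for g(t, ·) = f t · + a ·
  have hLip : ∀ t ∈ Icc (0:ℝ) S, ∀ x y : ℝ,
      |(f t y + a * y) - (f t x + a * x)| ≤ b * |y - x| := by
    intro t ht x y
    rcases le_total x y with h | h
    · obtain ⟨h1, h2⟩ := hcond t ht x y h
      rw [abs_of_nonneg h1, abs_of_nonneg (by linarith)]
      linarith
    · obtain ⟨h1, h2⟩ := hcond t ht y x h
      rw [abs_sub_comm, abs_of_nonneg h1, abs_sub_comm y x, abs_of_nonneg (by linarith)]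
      linarith
  -- the space C([0,S], ℝ)
  haveI : Nonempty (Icc (0:ℝ) S) := ⟨0, le_refl 0, hS.le⟩
  let X := C(↥(Icc (0:ℝ) S), ℝ)
  haveI : Nonempty X := ⟨0⟩
  haveI : CompleteSpace X := by infer_instance
  let ext : X → ℝ → ℝ := fun u t => u (projIcc 0 S hS.le t)
  have hextc : ∀ u, Continuous (ext u) := fun u => u.continuous.comp continuous_projIcc
  have hextdist : ∀ (u v : X) (z : ℝ), |ext u z - ext v z| ≤ dist u v := by
    intro u v z
    rw [← Real.dist_eq]
    exact ContinuousMap.dist_apply_le_dist _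
  have hE : Real.exp (a * S) - 1 ≠ 0 := by
    have : 1 < Real.exp (a * S) := by
      rw [← Real.exp_zero]; exact Real.exp_lt_exp.2 (by positivity)
    linarith
  have hpFc : ∀ u : X, Continuous (pF S a f (ext u)) := by
    intro u
    exact continuous_iff_continuousAt.2 fun t => (pF_hasDerivAt hE hf (hextc u) t).continuousAt
  let T : X → X := fun u => ⟨fun t => pF S a f (ext u) t, (hpFc u).comp continuous_subtype_val⟩
  have hTapp : ∀ (u : X) (t : ↥(Icc (0:ℝ) S)), T u t = pF S a f (ext u) t := fun _ _ => rfl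
  have hδbd : ∀ (u v : X), ∀ z ∈ Icc (0:ℝ) S,
      |pg a f (ext u) z - pg a f (ext v) z| ≤ b * dist u v := by
    intro u v z hz
    refine (hLip z hz _ _).trans ?_
    exact mul_le_mul_of_nonneg_left (hextdist u v z) hb.le
  have hdistT : ∀ u v : X, dist (T u) (T v) ≤ b / a * dist u v := by
    intro u v
    rw [ContinuousMap.dist_le (by positivity)]
    intro p
    rw [hTapp, hTapp, Real.dist_eq]
    exact pF_dist_le hS ha hf (hextc u) (hextc v) (by positivity) (hδbd u v) p.2
  have hT : ContractingWith (Real.toNNReal (b / a)) T := by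
    constructor
    · rw [← Real.toNNReal_one]
      exact (Real.toNNReal_lt_toNNReal_iff one_pos).2 ((div_lt_one ha).2 hba)
    · refine LipschitzWith.of_dist_le_mul fun u v => ?_
      rw [Real.coe_toNNReal _ (by positivity)]
      exact hdistT u v
  let u₀ : X := ContractingWith.fixedPoint T hT
  have hfix : T u₀ = u₀ := hT.fixedPoint_isFixedPt
  set U : ℝ → ℝ := pF S a f (ext u₀) with hUdef
  have hUext : ∀ t ∈ Icc (0:ℝ) S, ext u₀ t = U t := by
    intro t ht
    show u₀ (projIcc 0 S hS.le t) = U t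
    rw [projIcc_of_mem hS.le ht]
    conv_lhs => rw [← hfix]
    rfl
  have hUderiv : ∀ t ∈ Icc (0:ℝ) S, HasDerivAt U (f t (U t)) t := by
    intro t ht
    have h := pF_hasDerivAt hE hf (hextc u₀) t
    have heq : -(a * pF S a f (ext u₀) t) + pg a f (ext u₀) t = f t (U t) := by
      unfold pg
      rw [hUext t ht, ← hUdef]
      ring
    rw [heq] at h
    exact h
  have hUper : U 0 = U S := pF_periodic hE
  -- uniqueness via Gronwall
  have huniq : ∀ v : ℝ → ℝ,
      (∀ t ∈ Icc (0:ℝ) S, HasDerivWithinAt v (f t (v t)) (Icc 0 S) t) →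
      v 0 = v S → Set.EqOn v U (Icc 0 S) := by
    intro v hv hv0 t ht
    set m : ℝ → ℝ := fun t => Real.exp (a * t) * (v t - U t) with hm
    set m' : ℝ → ℝ := fun t =>
      Real.exp (a * t) * ((f t (v t) + a * v t) - (f t (U t) + a * U t)) with hm'
    have hUc : Continuous U := hpFc u₀
    have hvc : ContinuousOn v (Icc 0 S) := fun s hs => (hv s hs).continuousWithinAt
    have hmc : ContinuousOn m (Icc 0 S) :=
      ((Real.continuous_exp.comp (continuous_const.mul continuous_id)).continuousOn).mul
        (hvc.sub hUc.continuousOn)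
    have hmd : ∀ s ∈ Ico (0:ℝ) S, HasDerivWithinAt m (m' s) (Ici s) s := by
      intro s hs
      have hmem : Icc (0:ℝ) S ∈ nhdsWithin s (Ici s) := by
        refine Filter.mem_of_superset (inter_mem_nhdsWithin (Ici s) (Iic_mem_nhds hs.2)) ?_
        rintro z ⟨hz1, hz2⟩
        exact ⟨hs.1.trans hz1, hz2⟩
      have hvs : HasDerivWithinAt v (f s (v s)) (Ici s) s :=
        (hv s (Ico_subset_Icc_self hs)).mono_of_mem_nhdsWithin hmem
      have hUs : HasDerivWithinAt U (f s (U s)) (Ici s) s :=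
        (hUderiv s (Ico_subset_Icc_self hs)).hasDerivWithinAt
      have hes : HasDerivWithinAt (fun t : ℝ => Real.exp (a * t))
          (Real.exp (a * s) * (a * 1)) (Ici s) s :=
        (((hasDerivAt_id s).const_mul a).exp).hasDerivWithinAt
      have h2 := hes.mul (hvs.sub hUs)
      have heq : Real.exp (a * s) * (a * 1) * (v s - U s) +
          Real.exp (a * s) * (f s (v s) - f s (U s)) = m' s := by
        simp only [hm']; ring
      rw [Pi.sub_apply, heq] at h2
      exact h2
    have hbound : ∀ s ∈ Ico (0:ℝ) S, ‖m' s‖ ≤ b * ‖m s‖ + 0 := by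
      intro s hs
      rw [add_zero]
      simp only [hm', hm, Real.norm_eq_abs]
      simp only [abs_mul, abs_of_nonneg (Real.exp_pos (a*s)).le]
      calc Real.exp (a*s) * |(f s (v s) + a * v s) - (f s (U s) + a * U s)|
          ≤ Real.exp (a*s) * (b * |v s - U s|) :=
            mul_le_mul_of_nonneg_left (hLip s (Ico_subset_Icc_self hs) _ _)
              (Real.exp_pos _).le
        _ = b * (Real.exp (a*s) * |v s - U s|) := by ring
    have gron := norm_le_gronwallBound_of_norm_deriv_right_le hmc hmd (le_refl ‖m 0‖) hbound
    have hm0 : m 0 = v 0 - U 0 := by simp [hm]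
    have h0 : v 0 - U 0 = 0 := by
      have hS' := gron S (right_mem_Icc.2 hS.le)
      rw [sub_zero, gronwallBound_ε0] at hS'
      have hmS : m S = Real.exp (a*S) * (v 0 - U 0) := by
        simp only [hm]; rw [← hv0, ← hUper]
      rw [hmS, hm0] at hS'
      simp only [Real.norm_eq_abs, abs_mul, abs_of_nonneg (Real.exp_pos _).le] at hS'
      have hlt : Real.exp (b * S) < Real.exp (a * S) := Real.exp_lt_exp.2 (by nlinarith)
      rcases eq_or_lt_of_le (abs_nonneg (v 0 - U 0)) with hX | hX
      · exact abs_eq_zero.1 hX.symm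
      · exfalso
        have := mul_lt_mul_of_pos_left hlt hX
        nlinarith
    have hT' := gron t ht
    rw [sub_zero, gronwallBound_ε0, hm0, h0] at hT'
    simp only [Real.norm_eq_abs, abs_zero, zero_mul] at hT'
    have hmt : m t = 0 := abs_eq_zero.1 (le_antisymm hT' (abs_nonneg _))
    have : v t - U t = 0 := by
      rcases mul_eq_zero.1 hmt with h | h
      · exact absurd h (Real.exp_ne_zero _)
      · exact h
    linarith [this]
  exact ⟨U, ⟨fun t ht => (hUderiv t ht).hasDerivWithinAt, hUper⟩, huniq⟩
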